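/- Let f: ℝ^n → ℝ be 1-weakly-quasi-convex (in particular, convex) and differentiable with ν-Hölder continuous gradient with constant M_ν for some ν ∈ [0,1], with minimizer x*, and let ε > 0. Let (x^k), (A_k) be generated by the universal method UAGMsDR, so that A_k f(x^k) ≤ min_x ψ_k(x) + A_k ε/2 with ψ_k(x) = (1/2)‖x − x^0‖₂² + Σ_{i<k} a_{i+1}(f(y^i) + ⟨∇f(y^i), x − y^i⟩), and A_k ≥ [(1+ν)/(1−ν)]^{(1−ν)/(1+ν)} k^{(1+3ν)/(1+ν)} ε^{(1−ν)/(1+ν)} / (2^{(1+3ν)/(1+ν)} M_ν^{2/(1+ν)}). Then for every k: f(x^k) − f(x*) ≤ V(x*, x^0)/A_k + ε/2 where V(x*, x^0) = (1/2)‖x* − x^0‖₂², and if V(x*, x^0) ≤ Θ then an ε-accurate point (f(x^N) − f(x*) ≤ ε) is obtained after at most N ≤ 2^{(2+4ν)/(1+3ν)} [(1−ν)/(1+ν)]^{(1−ν)/(1+3ν)} (M_ν/ε)^{2/(1+3ν)} Θ^{(1+ν)/(1+3ν)} iterations. -/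

import Mathlib

open scoped RealInnerProductSpace

set_option maxHeartbeats 1000000 in
/-- (Theorem 9 of the paper.) For a `1`-weakly-quasi-convex `f` with
`ν`-Hölder continuous gradient, the universal method UAGMsDR satisfies
`f (x k) - f x* ≤ V(x*, x⁰)/A k + ε/2` with `V(x*, x⁰) = (1/2)‖x* - x⁰‖²`, and if
`V(x*, x⁰) ≤ Θ` an `ε`-accurate point is obtained after at most
`2^{(2+4ν)/(1+3ν)} ((1-ν)/(1+ν))^{(1-ν)/(1+3ν)} (M_ν/ε)^{2/(1+3ν)} Θ^{(1+ν)/(1+3ν)}`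
iterations. -/
theorem stmt_15 (n : ℕ) (ν Mν ε : ℝ) (hν : ν ∈ Set.Icc (0 : ℝ) 1) (hMν : 0 ≤ Mν)
    (hε : 0 < ε)
    (f : EuclideanSpace ℝ (Fin n) → ℝ)
    (g : EuclideanSpace ℝ (Fin n) → EuclideanSpace ℝ (Fin n))
    (hdiff : ∀ z, HasGradientAt f (g z) z)
    (hhold : ∀ z w, ‖g z - g w‖ ≤ Mν * ‖z - w‖ ^ ν)
    (xstar : EuclideanSpace ℝ (Fin n)) (hstar : ∀ z, f xstar ≤ f z)
    (hwqc : ∀ z, f z - f xstar ≤ ⟪g z, z - xstar⟫)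
    (x y : ℕ → EuclideanSpace ℝ (Fin n)) (a A : ℕ → ℝ)
    (hapos : ∀ i, 0 < a (i + 1))
    (hA : ∀ k, A k = ∑ i ∈ Finset.range k, a (i + 1))
    (hψ : ∀ k (z : EuclideanSpace ℝ (Fin n)), A k * f (x k) ≤
      (1 / 2) * ‖z - x 0‖ ^ 2 +
        (∑ i ∈ Finset.range k, a (i + 1) * (f (y i) + ⟪g (y i), z - y i⟫)) +
        A k * ε / 2)
    (hArate : ∀ k : ℕ,
      ((1 + ν) / (1 - ν)) ^ ((1 - ν) / (1 + ν)) *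
        (k : ℝ) ^ ((1 + 3 * ν) / (1 + ν)) * ε ^ ((1 - ν) / (1 + ν)) /
        ((2 : ℝ) ^ ((1 + 3 * ν) / (1 + ν)) * Mν ^ (2 / (1 + ν))) ≤ A k) :
    (∀ k : ℕ, 1 ≤ k →
      f (x k) - f xstar ≤ ((1 / 2) * ‖xstar - x 0‖ ^ 2) / A k + ε / 2) ∧
    (∀ Θ : ℝ, (1 / 2) * ‖xstar - x 0‖ ^ 2 ≤ Θ →
      ∀ N : ℕ, (2 : ℝ) ^ ((2 + 4 * ν) / (1 + 3 * ν)) *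
          ((1 - ν) / (1 + ν)) ^ ((1 - ν) / (1 + 3 * ν)) *
          (Mν / ε) ^ (2 / (1 + 3 * ν)) * Θ ^ ((1 + ν) / (1 + 3 * ν)) ≤ (N : ℝ) →
        f (x N) - f xstar ≤ ε) := by
  obtain ⟨hν0, hν1⟩ := hν
  have hc : (0:ℝ) < 1 + ν := by linarith
  have hd : (0:ℝ) < 1 + 3 * ν := by linarith
  have he : (0:ℝ) ≤ 1 - ν := by linarith
  have hV : 0 ≤ (1 / 2) * ‖xstar - x 0‖ ^ 2 := by positivity
  have part1 : ∀ k : ℕ, 1 ≤ k →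
      f (x k) - f xstar ≤ ((1 / 2) * ‖xstar - x 0‖ ^ 2) / A k + ε / 2 := by
    intro k hk
    have hAk : 0 < A k := by
      rw [hA]
      exact Finset.sum_pos (fun i _ => hapos i)
        (Finset.nonempty_range_iff.mpr (by omega))
    have hsum : (∑ i ∈ Finset.range k, a (i + 1) * (f (y i) + ⟪g (y i), xstar - y i⟫))
        ≤ A k * f xstar := by
      rw [hA, Finset.sum_mul]
      refine Finset.sum_le_sum fun i _ => ?_
      have h1 := hwqc (y i)
      have h2 : ⟪g (y i), xstar - y i⟫ = -⟪g (y i), y i - xstar⟫ := by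
        rw [show xstar - y i = -(y i - xstar) from (neg_sub _ _).symm, inner_neg_right]
      have h3 : f (y i) + ⟪g (y i), xstar - y i⟫ ≤ f xstar := by rw [h2]; linarith
      exact mul_le_mul_of_nonneg_left h3 (hapos i).le
    have h1 := hψ k xstar
    have h4 : (f (x k) - f xstar) * A k ≤
        (1 / 2) * ‖xstar - x 0‖ ^ 2 + A k * (ε / 2) := by nlinarith
    have h5 : f (x k) - f xstar ≤
        ((1 / 2) * ‖xstar - x 0‖ ^ 2 + A k * (ε / 2)) / A k := (le_div_iff₀ hAk).mpr h4
    calc f (x k) - f xstar ≤ ((1 / 2) * ‖xstar - x 0‖ ^ 2 + A k * (ε / 2)) / A k := h5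
      _ = ((1 / 2) * ‖xstar - x 0‖ ^ 2) / A k + ε / 2 := by
          field_simp
  refine ⟨part1, ?_⟩
  intro Θ hΘ N hN
  by_cases hM0 : Mν = 0
  · -- gradient is constant, hence zero everywhere: f is constant
    have hloc : IsLocalMin f xstar := Filter.Eventually.of_forall hstar
    have h0 : g xstar = 0 := by
      have h := hloc.hasFDerivAt_eq_zero (hdiff xstar).hasFDerivAt
      exact (LinearIsometryEquiv.map_eq_zero_iff _).mp h
    have hg : g (x N) = 0 := by
      have h := hhold (x N) xstar
      rw [hM0, zero_mul] at h
      have h2 : g (x N) - g xstar = 0 := norm_le_zero_iff.mp h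
      rw [h0, sub_zero] at h2
      exact h2
    have h := hwqc (x N)
    rw [hg, inner_zero_left] at h
    linarith
  · have hM : 0 < Mν := lt_of_le_of_ne hMν (Ne.symm hM0)
    rcases eq_or_lt_of_le (hV.trans hΘ) with hΘ0 | hΘ0
    · -- Θ = 0, so xstar = x 0
      have hV0 : (1 / 2) * ‖xstar - x 0‖ ^ 2 = 0 := le_antisymm (hΘ.trans hΘ0.symm.le) hV
      have hxx : xstar = x 0 := by
        have hn : ‖xstar - x 0‖ = 0 := by nlinarith [norm_nonneg (xstar - x 0)]
        exact sub_eq_zero.mp (norm_eq_zero.mp hn)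
      rcases Nat.eq_zero_or_pos N with h | h
      · subst h; rw [hxx, sub_self]; exact hε.le
      · have hp1 := part1 N h
        rw [hV0, zero_div] at hp1
        linarith
    · -- main case: Θ > 0, Mν > 0
      have hDβ : (0:ℝ) < ((1 - ν) / (1 + ν)) ^ ((1 - ν) / (1 + 3 * ν)) := by
        rcases eq_or_lt_of_le hν1 with h1 | h1
        · rw [show (1 - ν) / (1 + 3 * ν) = 0 by rw [← h1]; norm_num, Real.rpow_zero]
          norm_num
        · have he' : (0:ℝ) < 1 - ν := by linarith
          exact Real.rpow_pos_of_pos (by positivity) _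
      have hBpos : (0:ℝ) < (2 : ℝ) ^ ((2 + 4 * ν) / (1 + 3 * ν)) *
          ((1 - ν) / (1 + ν)) ^ ((1 - ν) / (1 + 3 * ν)) *
          (Mν / ε) ^ (2 / (1 + 3 * ν)) * Θ ^ ((1 + ν) / (1 + 3 * ν)) := by
        have h2 := Real.rpow_pos_of_pos (show (0:ℝ) < 2 by norm_num)
          ((2 + 4 * ν) / (1 + 3 * ν))
        have h3 := Real.rpow_pos_of_pos (div_pos hM hε) (2 / (1 + 3 * ν))
        have h4 := Real.rpow_pos_of_pos hΘ0 ((1 + ν) / (1 + 3 * ν))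
        positivity
      have hN1 : 1 ≤ N := by
        by_contra h
        have hN0 : N = 0 := by omega
        rw [hN0, Nat.cast_zero] at hN
        linarith
      -- key exponent algebra
      have hMr : (0:ℝ) < Mν ^ (2 / (1 + ν)) := Real.rpow_pos_of_pos hM _
      have h2p : (0:ℝ) < (2:ℝ) ^ ((1 + 3 * ν) / (1 + ν)) :=
        Real.rpow_pos_of_pos (by norm_num) _
      have hεr : (0:ℝ) < ε ^ (2 / (1 + ν)) := Real.rpow_pos_of_pos hε _
      have hC1 : (0:ℝ) ≤ ((1 + ν) / (1 - ν)) ^ ((1 - ν) / (1 + ν)) :=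
        Real.rpow_nonneg (by positivity) _
      have hεq : (0:ℝ) ≤ ε ^ ((1 - ν) / (1 + ν)) := Real.rpow_nonneg hε.le _
      have e1 : ((2 : ℝ) ^ ((2 + 4 * ν) / (1 + 3 * ν)) *
            ((1 - ν) / (1 + ν)) ^ ((1 - ν) / (1 + 3 * ν)) *
            (Mν / ε) ^ (2 / (1 + 3 * ν)) * Θ ^ ((1 + ν) / (1 + 3 * ν)))
              ^ ((1 + 3 * ν) / (1 + ν))
          = (2 : ℝ) ^ ((2 + 4 * ν) / (1 + ν)) *
            ((1 - ν) / (1 + ν)) ^ ((1 - ν) / (1 + ν)) *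
            (Mν / ε) ^ (2 / (1 + ν)) * Θ := by
        rw [Real.mul_rpow (by positivity) (by positivity),
            Real.mul_rpow (by positivity) (by positivity),
            Real.mul_rpow (by positivity) (by positivity),
            ← Real.rpow_mul (by norm_num), ← Real.rpow_mul (by positivity),
            ← Real.rpow_mul (by positivity), ← Real.rpow_mul hΘ0.le,
            show (2 + 4 * ν) / (1 + 3 * ν) * ((1 + 3 * ν) / (1 + ν)) = (2 + 4 * ν) / (1 + ν)
              from by field_simp,
            show (1 - ν) / (1 + 3 * ν) * ((1 + 3 * ν) / (1 + ν)) = (1 - ν) / (1 + ν)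
              from by field_simp,
            show 2 / (1 + 3 * ν) * ((1 + 3 * ν) / (1 + ν)) = 2 / (1 + ν)
              from by field_simp,
            show (1 + ν) / (1 + 3 * ν) * ((1 + 3 * ν) / (1 + ν)) = 1
              from by field_simp,
            Real.rpow_one]
      have hDq : ((1 + ν) / (1 - ν)) ^ ((1 - ν) / (1 + ν)) *
          ((1 - ν) / (1 + ν)) ^ ((1 - ν) / (1 + ν)) = 1 := by
        rcases eq_or_lt_of_le hν1 with h1 | h1
        · rw [show (1 - ν) / (1 + ν) = 0 by rw [← h1]; norm_num,
            Real.rpow_zero, Real.rpow_zero]; norm_num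
        · have he' : (0:ℝ) < 1 - ν := by linarith
          rw [← Real.mul_rpow (by positivity) (by positivity),
            show (1 + ν) / (1 - ν) * ((1 - ν) / (1 + ν)) = 1 from by field_simp,
            Real.one_rpow]
      have h2e : (2:ℝ) ^ ((2 + 4 * ν) / (1 + ν)) = 2 * (2:ℝ) ^ ((1 + 3 * ν) / (1 + ν)) := by
        rw [show (2 + 4 * ν) / (1 + ν) = 1 + (1 + 3 * ν) / (1 + ν) from by field_simp; ring,
          Real.rpow_add (by norm_num), Real.rpow_one]
      have hεe : ε ^ ((1 - ν) / (1 + ν)) = ε⁻¹ * ε ^ (2 / (1 + ν)) := by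
        rw [show (1 - ν) / (1 + ν) = -1 + 2 / (1 + ν) from by field_simp; ring,
          Real.rpow_add hε, Real.rpow_neg_one]
      have hMd : (Mν / ε) ^ (2 / (1 + ν)) = Mν ^ (2 / (1 + ν)) / ε ^ (2 / (1 + ν)) :=
        Real.div_rpow hMν hε.le _
      have hEq : ((1 + ν) / (1 - ν)) ^ ((1 - ν) / (1 + ν)) *
          ((2 : ℝ) ^ ((2 + 4 * ν) / (1 + 3 * ν)) *
            ((1 - ν) / (1 + ν)) ^ ((1 - ν) / (1 + 3 * ν)) *
            (Mν / ε) ^ (2 / (1 + 3 * ν)) * Θ ^ ((1 + ν) / (1 + 3 * ν)))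
              ^ ((1 + 3 * ν) / (1 + ν)) * ε ^ ((1 - ν) / (1 + ν)) /
          ((2 : ℝ) ^ ((1 + 3 * ν) / (1 + ν)) * Mν ^ (2 / (1 + ν)))
          = 2 * Θ / ε := by
        rw [e1, h2e, hεe, hMd]
        calc ((1 + ν) / (1 - ν)) ^ ((1 - ν) / (1 + ν)) *
              (2 * (2:ℝ) ^ ((1 + 3 * ν) / (1 + ν)) *
                ((1 - ν) / (1 + ν)) ^ ((1 - ν) / (1 + ν)) *
                (Mν ^ (2 / (1 + ν)) / ε ^ (2 / (1 + ν))) * Θ) *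
              (ε⁻¹ * ε ^ (2 / (1 + ν))) /
              ((2:ℝ) ^ ((1 + 3 * ν) / (1 + ν)) * Mν ^ (2 / (1 + ν)))
            = (((1 + ν) / (1 - ν)) ^ ((1 - ν) / (1 + ν)) *
                ((1 - ν) / (1 + ν)) ^ ((1 - ν) / (1 + ν))) * (2 * Θ / ε) *
              (((2:ℝ) ^ ((1 + 3 * ν) / (1 + ν)) / (2:ℝ) ^ ((1 + 3 * ν) / (1 + ν))) *
                (Mν ^ (2 / (1 + ν)) / Mν ^ (2 / (1 + ν))) *
                (ε ^ (2 / (1 + ν)) / ε ^ (2 / (1 + ν)))) := by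
              field_simp
          _ = 2 * Θ / ε := by
              rw [hDq, div_self h2p.ne', div_self hMr.ne', div_self hεr.ne']
              ring
      have key : 2 * Θ / ε ≤ A N := by
        refine le_trans ?_ (hArate N)
        rw [← hEq]
        gcongr
      have hAN : 0 < A N := lt_of_lt_of_le (by positivity) key
      have hp1 := part1 N hN1
      have hdiv : ((1 / 2) * ‖xstar - x 0‖ ^ 2) / A N ≤ ε / 2 := by
        rw [div_le_iff₀ hAN]
        have hmul := mul_le_mul_of_nonneg_left key (le_of_lt (half_pos hε))
        have heq2 : (ε / 2) * (2 * Θ / ε) = Θ := by field_simp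
        linarith
      clear hEq e1 hDq h2e hεe hMd key hN hArate hψ
      linarith
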